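/- For a signed graph Σ = (G, σ) with connected underlying simple graph G, the following are equivalent: (i) Σ is balanced; (ii) D^max(Σ) is cospectral with the distance matrix D(G); (iii) D^min(Σ) is cospectral with D(G); (iv) the largest eigenvalue of D^max(Σ) equals the largest eigenvalue of D(G); (v) the largest eigenvalue of D^min(Σ) equals the largest eigenvalue of D(G). -/

import Mathlib

open SimpleGraph

/-- The sign (product of edge signs) of a walk in a graph, computed along its darts. -/
def walkSign {V : Type*} {G : SimpleGraph V} (σ : V → V → ℤ) {u v : V} (p : G.Walk u v) : ℤ :=
  (p.darts.map fun d => σ d.toProd.1 d.toProd.2).prod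

/-- `σ` is a signature on `G`: a symmetric function that is `±1`-valued on edges. -/
def IsSignature {V : Type*} (G : SimpleGraph V) (σ : V → V → ℤ) : Prop :=
  (∀ u v, σ u v = σ v u) ∧ ∀ u v, G.Adj u v → σ u v = 1 ∨ σ u v = -1

/-- A signed graph is balanced when every cycle has sign `+1`. -/
def IsBalanced {V : Type*} (G : SimpleGraph V) (σ : V → V → ℤ) : Prop :=
  ∀ (u : V) (p : G.Walk u u), p.IsCycle → walkSign σ p = 1

/-- A walk is a shortest path when it is a path whose length is the graph distance
between its endpoints. -/
def IsShortestPath {V : Type*} {G : SimpleGraph V} {u v : V} (p : G.Walk u v) : Prop :=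
  p.IsPath ∧ p.length = G.dist u v

open scoped Classical in
/-- `σmax u v = +1` if some shortest `u v`-path is positive, `-1` otherwise. -/
noncomputable def sigmaMax {V : Type*} (G : SimpleGraph V) (σ : V → V → ℤ) (u v : V) : ℤ :=
  if ∃ p : G.Walk u v, IsShortestPath p ∧ walkSign σ p = 1 then 1 else -1

open scoped Classical in
/-- `σmin u v = +1` if all shortest `u v`-paths are positive, `-1` otherwise. -/
noncomputable def sigmaMin {V : Type*} (G : SimpleGraph V) (σ : V → V → ℤ) (u v : V) : ℤ :=
  if ∀ p : G.Walk u v, IsShortestPath p → walkSign σ p = 1 then 1 else -1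

/-- The signed distance matrix `D^max`, with `(u,v)` entry `σmax(u,v)·d(u,v)`. -/
noncomputable def Dmax {V : Type*} (G : SimpleGraph V) (σ : V → V → ℤ) : Matrix V V ℝ :=
  Matrix.of fun u v => (sigmaMax G σ u v : ℝ) * (G.dist u v : ℝ)

/-- The signed distance matrix `D^min`, with `(u,v)` entry `σmin(u,v)·d(u,v)`. -/
noncomputable def Dmin {V : Type*} (G : SimpleGraph V) (σ : V → V → ℤ) : Matrix V V ℝ :=
  Matrix.of fun u v => (sigmaMin G σ u v : ℝ) * (G.dist u v : ℝ)

/-- Two vertices are distance-compatible if all shortest paths between them have the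
same sign. -/
def Compatible {V : Type*} (G : SimpleGraph V) (σ : V → V → ℤ) (u v : V) : Prop :=
  ∀ p q : G.Walk u v, IsShortestPath p → IsShortestPath q → walkSign σ p = walkSign σ q

/-- A signed graph is distance-compatible if every pair of vertices is
distance-compatible. -/
def IsCompatibleGraph {V : Type*} (G : SimpleGraph V) (σ : V → V → ℤ) : Prop :=
  ∀ u v, Compatible G σ u v

/-- The largest eigenvalue of a (symmetric) real matrix: the supremum of the set of real
roots of its characteristic polynomial. -/
noncomputable def largestEigenvalue {n : Type*} [Fintype n] [DecidableEq n]
    (M : Matrix n n ℝ) : ℝ :=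
  sSup {x : ℝ | M.charpoly.IsRoot x}


set_option linter.unusedSectionVars false

section WS
variable {V : Type*} {G : SimpleGraph V} (σ : V → V → ℤ)

@[simp] lemma walkSign_nil {u : V} : walkSign σ (Walk.nil : G.Walk u u) = 1 := rfl

@[simp] lemma walkSign_cons {u v w : V} (h : G.Adj u v) (p : G.Walk v w) :
    walkSign σ (Walk.cons h p) = σ u v * walkSign σ p := by
  simp [walkSign]

lemma walkSign_append {u v w : V} (p : G.Walk u v) (q : G.Walk v w) :
    walkSign σ (p.append q) = walkSign σ p * walkSign σ q := by
  simp [walkSign, Walk.darts_append]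

lemma walkSign_reverse (hs : ∀ a b, σ a b = σ b a) {u v : V} (p : G.Walk u v) :
    walkSign σ p.reverse = walkSign σ p := by
  simp only [walkSign, Walk.darts_reverse, List.map_reverse, List.prod_reverse, List.map_map]
  congr 1
  apply List.map_congr_left
  intro d _
  exact (hs d.toProd.1 d.toProd.2).symm

variable {σ}

lemma walkSign_unit (hσ : IsSignature G σ) {u v : V} (p : G.Walk u v) :
    walkSign σ p = 1 ∨ walkSign σ p = -1 := by
  induction p with
  | nil => left; rfl
  | cons h p ih =>
      rcases hσ.2 _ _ h with h1 | h1 <;> rcases ih with h2 | h2 <;>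
        simp [walkSign_cons, h1, h2]

lemma walkSign_mul_self (hσ : IsSignature G σ) {u v : V} (p : G.Walk u v) :
    walkSign σ p * walkSign σ p = 1 := by
  rcases walkSign_unit hσ p with h | h <;> simp [h]

lemma walkSign_closed (hσ : IsSignature G σ) (hb : IsBalanced G σ) :
    ∀ (n : ℕ) {u : V} (p : G.Walk u u), p.length = n → walkSign σ p = 1 := by
  classical
  intro n
  induction n using Nat.strong_induction_on with
  | _ n ih =>
    intro u p hn
    cases p with
    | nil => rfl
    | @cons _ v _ h q =>
      by_cases hnd : q.support.Nodup
      · -- q is a path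
        cases q with
        | nil => exact absurd h G.irrefl
        | @cons _ x _ h2 r =>
          cases r with
          | nil =>
            have h1 := hσ.1 v u
            rcases hσ.2 u v h with he | he <;>
              · simp only [walkSign_cons, walkSign_nil, h1, he]; norm_num
          | @cons _ y _ h3 s =>
            apply hb
            rw [Walk.cons_isCycle_iff]
            refine ⟨Walk.isPath_def _ |>.mpr hnd, ?_⟩
            intro hmem
            rw [Walk.edges_cons, List.mem_cons] at hmem
            rcases hmem with hmem | hmem
            · rw [Sym2.eq_iff] at hmem
              have hx : x = u := by
                rcases hmem with ⟨h1, h2⟩ | ⟨h1, h2⟩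
                · exact absurd h1 h.ne
                · exact h1.symm
              subst hx
              rw [Walk.support_cons, List.nodup_cons] at hnd
              have := hnd.2
              rw [Walk.support_cons, List.nodup_cons] at this
              exact this.1 (s.end_mem_support)
            · have hv : v ∈ (Walk.cons h3 s).support :=
                Walk.snd_mem_support_of_mem_edges _ hmem
              rw [Walk.support_cons, List.nodup_cons] at hnd
              exact hnd.1 hv
      · -- q has a repeated vertex w
        obtain ⟨w, hdup⟩ := List.exists_duplicate_iff_not_nodup.mpr hnd
        have hw : w ∈ q.support := hdup.mem
        have hq : (q.takeUntil w hw).append (q.dropUntil w hw) = q := q.take_spec hw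
        have hcount : 2 ≤ q.support.count w := List.duplicate_iff_two_le_count.mp hdup
        have hone : (q.takeUntil w hw).support.count w = 1 :=
          q.count_support_takeUntil_eq_one hw
        have hsupp : q.support =
            (q.takeUntil w hw).support ++ (q.dropUntil w hw).support.tail := by
          conv_lhs => rw [← hq]
          rw [Walk.support_append]
        have hwd : w ∈ (q.dropUntil w hw).support.tail := by
          by_contra hcon
          rw [hsupp, List.count_append, hone, List.count_eq_zero_of_not_mem hcon] at hcount
          omega
        have hnn : ¬ (q.dropUntil w hw).Nil := by
          intro hN
          have h0 := Walk.nil_iff_length_eq.mp hN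
          have h1 := (q.dropUntil w hw).length_support
          have h2 := List.ne_nil_of_mem hwd
          have h3 : (q.dropUntil w hw).support.tail.length = 0 := by
            rw [List.length_tail, h1, h0]
          exact h2 (List.eq_nil_of_length_eq_zero h3)
        obtain ⟨x, h2, e, hde⟩ := Walk.not_nil_iff.mp hnn
        rw [hde, Walk.support_cons, List.tail_cons] at hwd
        have he : (e.takeUntil w hwd).append (e.dropUntil w hwd) = e := e.take_spec hwd
        set t := q.takeUntil w hw with ht
        set tu := e.takeUntil w hwd with htu
        set r := e.dropUntil w hwd with hr
        have hlq : q.length = t.length + (tu.length + r.length + 1) := by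
          conv_lhs => rw [← hq]
          rw [Walk.length_append, hde, Walk.length_cons]
          conv_lhs => rw [← he]
          rw [Walk.length_append]
        have hln : n = t.length + tu.length + r.length + 2 := by
          rw [← hn, Walk.length_cons, hlq]; omega
        have ihc : walkSign σ (Walk.cons h2 tu) = 1 := by
          refine ih (Walk.cons h2 tu).length ?_ _ rfl
          rw [Walk.length_cons]; omega
        have ihp : walkSign σ (Walk.cons h (t.append r)) = 1 := by
          refine ih (Walk.cons h (t.append r)).length ?_ _ rfl
          rw [Walk.length_cons, Walk.length_append]; omega
        have hsq : walkSign σ q = walkSign σ t * (σ w x * (walkSign σ tu * walkSign σ r)) := by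
          conv_lhs => rw [← hq]
          rw [walkSign_append, hde, walkSign_cons]
          conv_lhs => rw [show e = tu.append r from he.symm]
          rw [walkSign_append]
        rw [walkSign_cons, hsq]
        rw [walkSign_cons] at ihc
        rw [walkSign_cons, walkSign_append] at ihp
        nlinarith [ihc, ihp]

end WS

section Switch
variable {V : Type*} {G : SimpleGraph V} {σ : V → V → ℤ}

lemma walkSign_eq_of_balanced (hσ : IsSignature G σ) (hb : IsBalanced G σ)
    {u v : V} (p q : G.Walk u v) : walkSign σ p = walkSign σ q := by
  have h1 : walkSign σ (p.append q.reverse) = 1 :=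
    walkSign_closed hσ hb _ _ rfl
  rw [walkSign_append, walkSign_reverse σ hσ.1] at h1
  have h2 := walkSign_mul_self hσ q
  calc walkSign σ p = walkSign σ p * (walkSign σ q * walkSign σ q) := by rw [h2, mul_one]
    _ = (walkSign σ p * walkSign σ q) * walkSign σ q := by ring
    _ = walkSign σ q := by rw [h1, one_mul]

lemma exists_switch (hσ : IsSignature G σ) (hG : G.Connected) (hb : IsBalanced G σ) :
    ∃ ε : V → ℤ, (∀ v, ε v = 1 ∨ ε v = -1) ∧ ∀ u v, G.Adj u v → σ u v = ε u * ε v := by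
  have hne : Nonempty V := hG.nonempty
  obtain ⟨r⟩ := hne
  have hwalk : ∀ v, Nonempty (G.Walk r v) := fun v => hG.preconnected r v
  refine ⟨fun v => walkSign σ (hwalk v).some, fun v => walkSign_unit hσ _, ?_⟩
  intro u v huv
  have h1 : walkSign σ ((hwalk u).some.append (Walk.cons huv Walk.nil)) =
      walkSign σ (hwalk v).some := walkSign_eq_of_balanced hσ hb _ _
  rw [walkSign_append, walkSign_cons, walkSign_nil, mul_one] at h1
  have h2 := walkSign_mul_self hσ (hwalk u).some
  simp only []
  calc σ u v = (walkSign σ (hwalk u).some * walkSign σ (hwalk u).some) * σ u v := by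
        rw [h2, one_mul]
    _ = walkSign σ (hwalk u).some * (walkSign σ (hwalk u).some * σ u v) := by ring
    _ = walkSign σ (hwalk u).some * walkSign σ (hwalk v).some := by rw [h1]

lemma walkSign_of_switch {ε : V → ℤ} (hunit : ∀ v, ε v * ε v = 1)
    (hε : ∀ u v, G.Adj u v → σ u v = ε u * ε v) {u v : V} (p : G.Walk u v) :
    walkSign σ p = ε u * ε v := by
  induction p with
  | nil => exact (hunit _).symm
  | @cons a b c h p ih =>
      rw [walkSign_cons, ih, hε _ _ h]
      calc (ε a * ε b) * (ε b * ε c) = ε a * (ε b * ε b) * ε c := by ring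
        _ = ε a * ε c := by rw [hunit b, mul_one]

lemma isBalanced_of_switch {ε : V → ℤ} (hunit : ∀ v, ε v * ε v = 1)
    (hε : ∀ u v, G.Adj u v → σ u v = ε u * ε v) : IsBalanced G σ := by
  intro u p _
  rw [walkSign_of_switch hunit hε, hunit]

end Switch


section Sigma
variable {V : Type*} {G : SimpleGraph V} {σ : V → V → ℤ}

lemma walkSign_length_one {u v : V} (p : G.Walk u v) (hl : p.length = 1) :
    walkSign σ p = σ u v := by
  cases p with
  | nil => simp at hl
  | cons h q =>
      cases q with
      | nil => simp
      | cons h2 r => simp [Walk.length_cons] at hl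

lemma exists_shortestPath (hG : G.Connected) (u v : V) :
    ∃ p : G.Walk u v, IsShortestPath p := by
  obtain ⟨p, hp, hl⟩ := (hG.preconnected u v).exists_path_of_dist
  exact ⟨p, hp, hl⟩

lemma IsShortestPath.reverse {u v : V} {p : G.Walk u v} (hp : IsShortestPath p) :
    IsShortestPath p.reverse :=
  ⟨hp.1.reverse, by rw [Walk.length_reverse, hp.2, SimpleGraph.dist_comm]⟩

lemma sigmaMax_adj (hσ : IsSignature G σ) {u v : V} (huv : G.Adj u v) :
    sigmaMax G σ u v = σ u v := by
  classical
  have hdist : G.dist u v = 1 := dist_eq_one_iff_adj.mpr huv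
  have hsp : ∀ p : G.Walk u v, IsShortestPath p → walkSign σ p = σ u v := fun p hp =>
    walkSign_length_one p (hp.2.trans hdist)
  have hp0 : IsShortestPath (Walk.cons huv Walk.nil) :=
    ⟨by simp [Walk.isPath_def, huv.ne], by simp [hdist]⟩
  rcases hσ.2 u v huv with h1 | h1
  · rw [sigmaMax, if_pos ⟨Walk.cons huv Walk.nil, hp0, by rw [hsp _ hp0, h1]⟩, h1]
  · rw [sigmaMax, if_neg, h1]
    rintro ⟨p, hp, hs⟩
    rw [hsp p hp, h1] at hs
    omega

lemma sigmaMin_adj (hσ : IsSignature G σ) {u v : V} (huv : G.Adj u v) :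
    sigmaMin G σ u v = σ u v := by
  classical
  have hdist : G.dist u v = 1 := dist_eq_one_iff_adj.mpr huv
  have hsp : ∀ p : G.Walk u v, IsShortestPath p → walkSign σ p = σ u v := fun p hp =>
    walkSign_length_one p (hp.2.trans hdist)
  have hp0 : IsShortestPath (Walk.cons huv Walk.nil) :=
    ⟨by simp [Walk.isPath_def, huv.ne], by simp [hdist]⟩
  rcases hσ.2 u v huv with h1 | h1
  · rw [sigmaMin, if_pos fun p hp => by rw [hsp p hp, h1], h1]
  · rw [sigmaMin, if_neg, h1]
    intro hall
    have := hall _ hp0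
    rw [hsp _ hp0, h1] at this
    omega

lemma sigmaMax_of_switch (hG : G.Connected) {ε : V → ℤ}
    (hunit : ∀ v, ε v * ε v = 1)
    (hε : ∀ u v, G.Adj u v → σ u v = ε u * ε v) (u v : V) :
    sigmaMax G σ u v = ε u * ε v := by
  classical
  obtain ⟨p0, hp0⟩ := exists_shortestPath hG u v
  have hsign : ∀ p : G.Walk u v, walkSign σ p = ε u * ε v := fun p =>
    walkSign_of_switch hunit hε p
  rcases mul_self_eq_one_iff.mp (hunit u) with hu | hu <;>
    rcases mul_self_eq_one_iff.mp (hunit v) with hv | hv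
  all_goals rw [sigmaMax]
  · rw [if_pos ⟨p0, hp0, by rw [hsign, hu, hv]; ring⟩, hu, hv]; ring
  · rw [if_neg, hu, hv]; · ring
    rintro ⟨p, _, hs⟩; rw [hsign, hu, hv] at hs; omega
  · rw [if_neg, hu, hv]; · ring
    rintro ⟨p, _, hs⟩; rw [hsign, hu, hv] at hs; omega
  · rw [if_pos ⟨p0, hp0, by rw [hsign, hu, hv]; ring⟩, hu, hv]; ring

lemma sigmaMin_of_switch (hG : G.Connected) {ε : V → ℤ}
    (hunit : ∀ v, ε v * ε v = 1)
    (hε : ∀ u v, G.Adj u v → σ u v = ε u * ε v) (u v : V) :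
    sigmaMin G σ u v = ε u * ε v := by
  classical
  obtain ⟨p0, hp0⟩ := exists_shortestPath hG u v
  have hsign : ∀ p : G.Walk u v, walkSign σ p = ε u * ε v := fun p =>
    walkSign_of_switch hunit hε p
  rcases mul_self_eq_one_iff.mp (hunit u) with hu | hu <;>
    rcases mul_self_eq_one_iff.mp (hunit v) with hv | hv
  all_goals rw [sigmaMin]
  · rw [if_pos fun p _ => by rw [hsign, hu, hv]; ring, hu, hv]; ring
  · rw [if_neg, hu, hv]; · ring
    intro hall; have := hall p0 hp0; rw [hsign, hu, hv] at this; omega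
  · rw [if_neg, hu, hv]; · ring
    intro hall; have := hall p0 hp0; rw [hsign, hu, hv] at this; omega
  · rw [if_pos fun p _ => by rw [hsign, hu, hv]; ring, hu, hv]; ring

lemma sigmaMax_symm (hσ : IsSignature G σ) (u v : V) :
    sigmaMax G σ u v = sigmaMax G σ v u := by
  classical
  have key : ∀ a b : V, (∃ p : G.Walk a b, IsShortestPath p ∧ walkSign σ p = 1) →
      ∃ p : G.Walk b a, IsShortestPath p ∧ walkSign σ p = 1 := by
    rintro a b ⟨p, hp, hs⟩
    exact ⟨p.reverse, hp.reverse, by rw [walkSign_reverse σ hσ.1, hs]⟩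
  rw [sigmaMax, sigmaMax]
  by_cases h : ∃ p : G.Walk u v, IsShortestPath p ∧ walkSign σ p = 1
  · rw [if_pos h, if_pos (key _ _ h)]
  · rw [if_neg h, if_neg fun h' => h (key _ _ h')]

lemma sigmaMin_symm (hσ : IsSignature G σ) (u v : V) :
    sigmaMin G σ u v = sigmaMin G σ v u := by
  classical
  have key : ∀ a b : V, (∀ p : G.Walk a b, IsShortestPath p → walkSign σ p = 1) →
      ∀ p : G.Walk b a, IsShortestPath p → walkSign σ p = 1 := by
    intro a b hall p hp
    rw [← walkSign_reverse σ hσ.1]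
    exact hall p.reverse hp.reverse
  rw [sigmaMin, sigmaMin]
  by_cases h : ∀ p : G.Walk u v, IsShortestPath p → walkSign σ p = 1
  · rw [if_pos h, if_pos (key _ _ h)]
  · rw [if_neg h, if_neg fun h' => h (key _ _ h')]

lemma sigmaMax_self (u : V) : sigmaMax G σ u u = 1 := by
  classical
  rw [sigmaMax, if_pos]
  exact ⟨Walk.nil, ⟨Walk.IsPath.nil, by simp [SimpleGraph.dist_self]⟩, rfl⟩

lemma sigmaMin_unit (u v : V) : sigmaMin G σ u v = 1 ∨ sigmaMin G σ u v = -1 := by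
  classical
  rw [sigmaMin]; split <;> simp

lemma sigmaMax_unit (u v : V) : sigmaMax G σ u v = 1 ∨ sigmaMax G σ u v = -1 := by
  classical
  rw [sigmaMax]; split <;> simp

end Sigma

section Spectral
open Matrix Polynomial
variable {n : Type*} [Fintype n] [DecidableEq n]

lemma charpoly_conj_eq (P M Q : Matrix n n ℝ) (hPQ : P * Q = 1) :
    (P * M * Q).charpoly = M.charpoly := by
  have hmap : (Polynomial.C.mapMatrix (P : Matrix n n ℝ)) * Polynomial.C.mapMatrix Q = 1 := by
    rw [← RingHom.map_mul, hPQ, RingHom.map_one]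
  have h1 : charmatrix (P * M * Q) =
      (Polynomial.C.mapMatrix P) * charmatrix M * (Polynomial.C.mapMatrix Q) := by
    rw [charmatrix, charmatrix, mul_sub, sub_mul]
    congr 1
    · rw [mul_assoc, (Matrix.scalar_commute (X : ℝ[X]) (Commute.all _) _).eq, ← mul_assoc,
        hmap, one_mul]
    · rw [RingHom.map_mul, RingHom.map_mul]
  have hdet : (Polynomial.C.mapMatrix P).det * (Polynomial.C.mapMatrix Q).det = 1 := by
    rw [← Matrix.det_mul, hmap, Matrix.det_one]
  rw [Matrix.charpoly, Matrix.charpoly, h1, Matrix.det_mul, Matrix.det_mul]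
  calc (Polynomial.C.mapMatrix P).det * (charmatrix M).det * (Polynomial.C.mapMatrix Q).det
      = ((Polynomial.C.mapMatrix P).det * (Polynomial.C.mapMatrix Q).det) * (charmatrix M).det :=
        by ring
    _ = (charmatrix M).det := by rw [hdet, one_mul]

lemma charpoly_diag (d : n → ℝ) :
    (Matrix.diagonal d).charpoly = ∏ i, (X - Polynomial.C (d i)) := by
  have h : charmatrix (Matrix.diagonal d) = Matrix.diagonal fun i => X - Polynomial.C (d i) := by
    ext i j
    by_cases h : i = j
    · subst h; simp
    · simp [Matrix.charmatrix_apply_ne _ _ _ h, Matrix.diagonal_apply_ne _ h]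
  rw [Matrix.charpoly, h, Matrix.det_diagonal]

lemma charpoly_hermitian (M : Matrix n n ℝ) (hM : M.IsHermitian) :
    M.charpoly = ∏ i, (X - Polynomial.C (hM.eigenvalues i)) := by
  have hd : Matrix.diagonal (RCLike.ofReal ∘ hM.eigenvalues) = Matrix.diagonal hM.eigenvalues := by
    congr 1
  conv_lhs => rw [hM.spectral_theorem]
  rw [Unitary.conjStarAlgAut_apply, charpoly_conj_eq _ _ _ (Matrix.mem_unitaryGroup_iff.mp hM.eigenvectorUnitary.2), hd,
    charpoly_diag]

lemma rootset_hermitian (M : Matrix n n ℝ) (hM : M.IsHermitian) :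
    {x : ℝ | M.charpoly.IsRoot x} = Set.range hM.eigenvalues := by
  ext x
  simp only [Set.mem_setOf_eq, charpoly_hermitian M hM, Polynomial.IsRoot, Polynomial.eval_prod,
    Finset.prod_eq_zero_iff, Polynomial.eval_sub, Polynomial.eval_X, Polynomial.eval_C,
    sub_eq_zero, Set.mem_range, Finset.mem_univ, true_and]
  exact ⟨fun ⟨i, h⟩ => ⟨i, h.symm⟩, fun ⟨i, h⟩ => ⟨i, h.symm⟩⟩

lemma largestEigenvalue_spec [Nonempty n] (M : Matrix n n ℝ) (hM : M.IsHermitian) :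
    (∃ i, hM.eigenvalues i = largestEigenvalue M) ∧
      ∀ j, hM.eigenvalues j ≤ largestEigenvalue M := by
  have h : largestEigenvalue M = sSup (Set.range hM.eigenvalues) := by
    rw [largestEigenvalue, rootset_hermitian M hM]
  constructor
  · rw [h]
    exact (Set.Nonempty.csSup_mem (Set.range_nonempty _) (Set.finite_range _))
  · intro j
    rw [h]
    exact le_csSup (Set.finite_range _).bddAbove ⟨j, rfl⟩

end Spectral

section Rayleigh
open Matrix Polynomial
variable {n : Type*} [Fintype n] [DecidableEq n]

lemma star_mulVec_eq (U : Matrix n n ℝ) (y : n → ℝ) : star U *ᵥ y = y ᵥ* U := by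
  ext i
  simp [Matrix.mulVec, Matrix.vecMul, dotProduct, Matrix.conjTranspose_apply, mul_comm]

lemma herm_decomp (M : Matrix n n ℝ) (hM : M.IsHermitian) (y : n → ℝ) :
    ∃ z : n → ℝ,
      y ⬝ᵥ (M *ᵥ y) = ∑ i, hM.eigenvalues i * z i ^ 2 ∧
      y ⬝ᵥ y = ∑ i, z i ^ 2 ∧
      M *ᵥ y = (hM.eigenvectorUnitary : Matrix n n ℝ) *ᵥ (fun i => hM.eigenvalues i * z i) ∧
      y = (hM.eigenvectorUnitary : Matrix n n ℝ) *ᵥ z := by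
  set U := (hM.eigenvectorUnitary : Matrix n n ℝ) with hUdef
  have hU1 : U * star U = 1 := Matrix.mem_unitaryGroup_iff.mp hM.eigenvectorUnitary.2
  have hd : Matrix.diagonal (RCLike.ofReal ∘ hM.eigenvalues) = Matrix.diagonal hM.eigenvalues := by
    congr 1
  have hspec : M = U * Matrix.diagonal hM.eigenvalues * star U := by
    have h := hM.spectral_theorem
    rw [hd] at h
    exact h
  set z := star U *ᵥ y with hzdef
  have hy : y = U *ᵥ z := by
    rw [hzdef, Matrix.mulVec_mulVec, hU1, Matrix.one_mulVec]
  have hdm : Matrix.diagonal hM.eigenvalues *ᵥ z = fun i => hM.eigenvalues i * z i := by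
    ext i
    rw [Matrix.mulVec_diagonal]
  have hMy : M *ᵥ y = U *ᵥ fun i => hM.eigenvalues i * z i := by
    conv_lhs => rw [hspec]
    rw [← Matrix.mulVec_mulVec, ← Matrix.mulVec_mulVec, ← hzdef, hdm]
  refine ⟨z, ?_, ?_, hMy, hy⟩
  · rw [hMy, Matrix.dotProduct_mulVec, ← star_mulVec_eq, ← hzdef, dotProduct]
    exact Finset.sum_congr rfl fun i _ => by ring
  · nth_rewrite 2 [hy]
    rw [Matrix.dotProduct_mulVec, ← star_mulVec_eq, ← hzdef, dotProduct]
    exact Finset.sum_congr rfl fun i _ => by ring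

lemma herm_main [Nonempty n] (M : Matrix n n ℝ) (hM : M.IsHermitian) :
    (∃ x : n → ℝ, x ≠ 0 ∧ M *ᵥ x = largestEigenvalue M • x) ∧
    (∀ y : n → ℝ, y ⬝ᵥ (M *ᵥ y) ≤ largestEigenvalue M * (y ⬝ᵥ y)) ∧
    (∀ y : n → ℝ, y ⬝ᵥ (M *ᵥ y) = largestEigenvalue M * (y ⬝ᵥ y) →
        M *ᵥ y = largestEigenvalue M • y) := by
  obtain ⟨⟨i0, hi0⟩, hub⟩ := largestEigenvalue_spec M hM
  refine ⟨⟨⇑(hM.eigenvectorBasis i0), ?_, by rw [hM.mulVec_eigenvectorBasis, hi0]⟩, ?_, ?_⟩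
  · intro h
    exact hM.eigenvectorBasis.orthonormal.ne_zero i0 (by ext i; exact congrFun h i)
  · intro y
    obtain ⟨z, h1, h2, _, _⟩ := herm_decomp M hM y
    rw [h1, h2, Finset.mul_sum]
    exact Finset.sum_le_sum fun i _ => mul_le_mul_of_nonneg_right (hub i) (sq_nonneg _)
  · intro y hy
    obtain ⟨z, h1, h2, h3, h4⟩ := herm_decomp M hM y
    have hsum : ∑ i, hM.eigenvalues i * z i ^ 2 = ∑ i, largestEigenvalue M * z i ^ 2 := by
      rw [← h1, hy, h2, Finset.mul_sum]
    have hterm := (Finset.sum_eq_sum_iff_of_le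
      (fun i _ => mul_le_mul_of_nonneg_right (hub i) (sq_nonneg (z i)))).mp hsum
    have hzi : (fun i => hM.eigenvalues i * z i) = fun i => largestEigenvalue M * z i := by
      funext i
      have := hterm i (Finset.mem_univ i)
      by_cases hz : z i = 0
      · rw [hz, mul_zero, mul_zero]
      · rw [mul_right_cancel₀ (pow_ne_zero 2 hz) this]
    rw [h3, hzi]
    have : (fun i => largestEigenvalue M * z i) = largestEigenvalue M • z := rfl
    rw [this, Matrix.mulVec_smul, ← h4]

end Rayleigh

section PF
open Matrix
variable {n : Type*} [Fintype n] [DecidableEq n]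

lemma pf_key [Nonempty n] (M D : Matrix n n ℝ) (hM : M.IsHermitian) (hD : D.IsHermitian)
    (habs : ∀ u v, |M u v| = D u v)
    (hpos : ∀ u v, u ≠ v → 0 < D u v)
    (heq : largestEigenvalue M = largestEigenvalue D) :
    ∃ ε : n → ℝ, (∀ v, ε v = 1 ∨ ε v = -1) ∧ ∀ u v, M u v = ε u * D u v * ε v := by
  obtain ⟨⟨x, hx0, hxe⟩, -, -⟩ := herm_main M hM
  obtain ⟨-, hray, heqc⟩ := herm_main D hD
  rw [heq] at hxe
  set lam := largestEigenvalue D with hlam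
  set a : n → ℝ := fun u => |x u| with ha
  have haa : a ⬝ᵥ a = x ⬝ᵥ x := by
    simp only [dotProduct, ha, abs_mul_abs_self]
  have hquadM : x ⬝ᵥ (M *ᵥ x) = ∑ u, ∑ v, x u * M u v * x v := by
    simp [dotProduct, Matrix.mulVec, Finset.mul_sum, mul_assoc]
  have hquadD : a ⬝ᵥ (D *ᵥ a) = ∑ u, ∑ v, a u * D u v * a v := by
    simp [dotProduct, Matrix.mulVec, Finset.mul_sum, mul_assoc]
  have hterm : ∀ u v : n, x u * M u v * x v ≤ a u * D u v * a v := by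
    intro u v
    calc x u * M u v * x v ≤ |x u * M u v * x v| := le_abs_self _
      _ = a u * D u v * a v := by rw [abs_mul, abs_mul, habs]
  have hS1 : x ⬝ᵥ (M *ᵥ x) = lam * (x ⬝ᵥ x) := by
    rw [hxe]
    simp [dotProduct, Finset.mul_sum]
    exact Finset.sum_congr rfl fun i _ => by ring
  have hchain1 : x ⬝ᵥ (M *ᵥ x) ≤ a ⬝ᵥ (D *ᵥ a) := by
    rw [hquadM, hquadD]
    exact Finset.sum_le_sum fun u _ => Finset.sum_le_sum fun v _ => hterm u v
  have hchain2 : a ⬝ᵥ (D *ᵥ a) ≤ lam * (x ⬝ᵥ x) := by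
    rw [← haa]; exact hray a
  have hDaq : a ⬝ᵥ (D *ᵥ a) = lam * (a ⬝ᵥ a) := by
    rw [haa]
    exact le_antisymm hchain2 (hS1 ▸ hchain1)
  have hDaev : D *ᵥ a = lam • a := heqc a hDaq
  have hsum_eq : ∑ u, ∑ v, x u * M u v * x v = ∑ u, ∑ v, a u * D u v * a v := by
    rw [← hquadM, ← hquadD, hDaq, haa, hS1]
  have houter := (Finset.sum_eq_sum_iff_of_le
    (fun u _ => Finset.sum_le_sum fun v _ => hterm u v)).mp hsum_eq
  have htw : ∀ u v : n, x u * M u v * x v = a u * D u v * a v := fun u v =>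
    (Finset.sum_eq_sum_iff_of_le (fun v _ => hterm u v)).mp
      (houter u (Finset.mem_univ u)) v (Finset.mem_univ v)
  have hDnn : ∀ u v : n, 0 ≤ D u v := by
    intro u v
    rw [← habs]; exact abs_nonneg _
  have hxall : ∀ u, x u ≠ 0 := by
    intro u hu
    have h1 : ∑ v, D u v * a v = lam * a u := by
      have := congrFun hDaev u
      simpa [Matrix.mulVec, dotProduct] using this
    have hau : a u = 0 := by rw [ha]; simp [hu]
    rw [hau, mul_zero] at h1
    have hterm0 := (Finset.sum_eq_zero_iff_of_nonneg
      (fun v _ => mul_nonneg (hDnn u v) (abs_nonneg (x v)))).mp h1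
    have hav : ∀ v, a v = 0 := by
      intro v
      by_cases hvu : v = u
      · rw [hvu]; exact hau
      · have := hterm0 v (Finset.mem_univ v)
        rcases mul_eq_zero.mp this with h | h
        · exact absurd h (ne_of_gt (hpos u v (Ne.symm hvu)))
        · exact h
    apply hx0
    funext v
    exact abs_eq_zero.mp (hav v)
  refine ⟨fun u => if 0 < x u then 1 else -1, fun v => by simp only []; split <;> simp, ?_⟩
  set ε : n → ℝ := fun u => if 0 < x u then 1 else -1 with hε
  have hεx : ∀ u, ε u * a u = x u := by
    intro u
    rw [hε, ha]
    by_cases h : 0 < x u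
    · simp only [if_pos h, one_mul, abs_of_pos h]
    · have hlt : x u < 0 := lt_of_le_of_ne (not_lt.mp h) (hxall u)
      simp only [if_neg h, abs_of_neg hlt]; ring
  have hεsq : ∀ u, ε u * ε u = 1 := by
    intro u; rw [hε]; simp only []; split <;> norm_num
  intro u v
  have hne : a u * a v ≠ 0 :=
    mul_ne_zero (abs_ne_zero.mpr (hxall u)) (abs_ne_zero.mpr (hxall v))
  have hkey : M u v * (a u * a v) = (ε u * D u v * ε v) * (a u * a v) := by
    calc M u v * (a u * a v)
        = (ε u * ε u) * (ε v * ε v) * (M u v * (a u * a v)) := by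
          rw [hεsq u, hεsq v]; ring
      _ = ε u * ε v * ((ε u * a u) * M u v * (ε v * a v)) := by ring
      _ = ε u * ε v * (x u * M u v * x v) := by rw [hεx u, hεx v]
      _ = ε u * ε v * (a u * D u v * a v) := by rw [htw u v]
      _ = (ε u * D u v * ε v) * (a u * a v) := by ring
  exact mul_right_cancel₀ hne hkey

end PF

section Assembly
variable {V : Type*} [Fintype V] [DecidableEq V] (G : SimpleGraph V) (σ : V → V → ℤ)

lemma dmat_herm : (Matrix.of fun u v => (G.dist u v : ℝ)).IsHermitian := by
  show _ = _
  ext u v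
  simp [Matrix.conjTranspose_apply, SimpleGraph.dist_comm]

variable {G σ}

lemma dmax_herm (hσ : IsSignature G σ) : (Dmax G σ).IsHermitian := by
  show _ = _
  ext u v
  simp [Matrix.conjTranspose_apply, Dmax, SimpleGraph.dist_comm, sigmaMax_symm hσ u v]

lemma dmin_herm (hσ : IsSignature G σ) : (Dmin G σ).IsHermitian := by
  show _ = _
  ext u v
  simp [Matrix.conjTranspose_apply, Dmin, SimpleGraph.dist_comm, sigmaMin_symm hσ u v]

lemma forward_charpoly (hσ : IsSignature G σ) (hG : G.Connected) (hb : IsBalanced G σ) :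
    (Dmax G σ).charpoly = (Matrix.of fun u v => (G.dist u v : ℝ)).charpoly ∧
    (Dmin G σ).charpoly = (Matrix.of fun u v => (G.dist u v : ℝ)).charpoly := by
  obtain ⟨ε, hεu, hε⟩ := exists_switch hσ hG hb
  have hunit : ∀ v, ε v * ε v = 1 := fun v => by rcases hεu v with h | h <;> rw [h] <;> norm_num
  set εr : V → ℝ := fun v => (ε v : ℝ) with hεr
  have hrunit : ∀ v, εr v * εr v = 1 := fun v => by
    show ((ε v : ℝ)) * ((ε v : ℝ)) = 1
    exact_mod_cast hunit v
  set P := Matrix.diagonal εr with hP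
  have hPP : P * P = 1 := by
    rw [hP, Matrix.diagonal_mul_diagonal]
    have h2 : (fun i => εr i * εr i) = fun _ => (1 : ℝ) := funext fun v => hrunit v
    rw [h2, Matrix.diagonal_one]
  have hDmax : Dmax G σ = P * (Matrix.of fun u v => (G.dist u v : ℝ)) * P := by
    ext u v
    simp only [Dmax, Matrix.of_apply, hP, Matrix.mul_diagonal, Matrix.diagonal_mul]
    rw [sigmaMax_of_switch hG hunit hε u v]
    push_cast
    ring
  have hDmin : Dmin G σ = P * (Matrix.of fun u v => (G.dist u v : ℝ)) * P := by
    ext u v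
    simp only [Dmin, Matrix.of_apply, hP, Matrix.mul_diagonal, Matrix.diagonal_mul]
    rw [sigmaMin_of_switch hG hunit hε u v]
    push_cast
    ring
  exact ⟨by rw [hDmax, charpoly_conj_eq _ _ _ hPP], by rw [hDmin, charpoly_conj_eq _ _ _ hPP]⟩

lemma backward_balanced (hσ : IsSignature G σ) (hG : G.Connected)
    {M : Matrix V V ℝ} (hMherm : M.IsHermitian)
    (hMabs : ∀ u v, |M u v| = (G.dist u v : ℝ))
    (hMadj : ∀ u v, G.Adj u v → M u v = (σ u v : ℝ))
    (h : largestEigenvalue M =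
      largestEigenvalue (Matrix.of fun u v => (G.dist u v : ℝ))) :
    IsBalanced G σ := by
  have hne : Nonempty V := hG.nonempty
  have habs : ∀ u v, |M u v| = (Matrix.of fun u v => (G.dist u v : ℝ)) u v := by
    intro u v; rw [hMabs]; simp
  have hpos : ∀ u v : V, u ≠ v → 0 < (Matrix.of fun u v => (G.dist u v : ℝ)) u v := by
    intro u v huv
    simp only [Matrix.of_apply]
    exact_mod_cast hG.pos_dist_of_ne huv
  obtain ⟨ε, hεu, hpf⟩ := pf_key M _ hMherm (dmat_herm G) habs hpos h
  set η : V → ℤ := fun v => if ε v = 1 then 1 else -1 with hη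
  have hcast : ∀ v, (η v : ℝ) = ε v := by
    intro v
    rw [hη]
    rcases hεu v with h1 | h1
    · simp [h1]
    · show ((if ε v = 1 then (1:ℤ) else -1 : ℤ) : ℝ) = ε v
      rw [if_neg (by rw [h1]; norm_num), h1]
      norm_num
  have hηunit : ∀ v, η v * η v = 1 := by
    intro v; rw [hη]; simp only []; split <;> norm_num
  refine isBalanced_of_switch hηunit ?_
  intro u v huv
  have hdist : G.dist u v = 1 := SimpleGraph.dist_eq_one_iff_adj.mpr huv
  have h1 := hpf u v
  rw [hMadj u v huv] at h1
  simp only [Matrix.of_apply, hdist, Nat.cast_one, mul_one] at h1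
  have : (σ u v : ℝ) = ((η u * η v : ℤ) : ℝ) := by
    rw [h1]
    push_cast [hcast]
    all_goals ring
  exact_mod_cast this

theorem balanced_iff_distance_spectral' (hσ : IsSignature G σ) (hG : G.Connected) :
    (IsBalanced G σ ↔
      (Dmax G σ).charpoly = (Matrix.of fun u v => (G.dist u v : ℝ)).charpoly) ∧
    (IsBalanced G σ ↔
      (Dmin G σ).charpoly = (Matrix.of fun u v => (G.dist u v : ℝ)).charpoly) ∧
    (IsBalanced G σ ↔
      largestEigenvalue (Dmax G σ) =
        largestEigenvalue (Matrix.of fun u v => (G.dist u v : ℝ))) ∧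
    (IsBalanced G σ ↔
      largestEigenvalue (Dmin G σ) =
        largestEigenvalue (Matrix.of fun u v => (G.dist u v : ℝ))) := by
  have habsmax : ∀ u v, |Dmax G σ u v| = (G.dist u v : ℝ) := by
    intro u v
    rcases sigmaMax_unit (G := G) (σ := σ) u v with h | h <;>
      · simp only [Dmax, Matrix.of_apply, h]
        push_cast
        simp [abs_of_nonneg]
  have habsmin : ∀ u v, |Dmin G σ u v| = (G.dist u v : ℝ) := by
    intro u v
    rcases sigmaMin_unit (G := G) (σ := σ) u v with h | h <;>
      · simp only [Dmin, Matrix.of_apply, h]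
        push_cast
        simp [abs_of_nonneg]
  have hadjmax : ∀ u v, G.Adj u v → Dmax G σ u v = (σ u v : ℝ) := by
    intro u v huv
    simp only [Dmax, Matrix.of_apply, sigmaMax_adj hσ huv,
      SimpleGraph.dist_eq_one_iff_adj.mpr huv, Nat.cast_one, mul_one]
  have hadjmin : ∀ u v, G.Adj u v → Dmin G σ u v = (σ u v : ℝ) := by
    intro u v huv
    simp only [Dmin, Matrix.of_apply, sigmaMin_adj hσ huv,
      SimpleGraph.dist_eq_one_iff_adj.mpr huv, Nat.cast_one, mul_one]
  have hev_of_cp : ∀ A B : Matrix V V ℝ, A.charpoly = B.charpoly →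
      largestEigenvalue A = largestEigenvalue B := by
    intro A B hAB
    rw [largestEigenvalue, largestEigenvalue, hAB]
  refine ⟨⟨fun hb => (forward_charpoly hσ hG hb).1,
      fun h => backward_balanced hσ hG (dmax_herm hσ) habsmax hadjmax (hev_of_cp _ _ h)⟩,
    ⟨fun hb => (forward_charpoly hσ hG hb).2,
      fun h => backward_balanced hσ hG (dmin_herm hσ) habsmin hadjmin (hev_of_cp _ _ h)⟩,
    ⟨fun hb => hev_of_cp _ _ (forward_charpoly hσ hG hb).1,
      fun h => backward_balanced hσ hG (dmax_herm hσ) habsmax hadjmax h⟩,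
    ⟨fun hb => hev_of_cp _ _ (forward_charpoly hσ hG hb).2,
      fun h => backward_balanced hσ hG (dmin_herm hσ) habsmin hadjmin h⟩⟩

end Assembly

/-- For a signed graph `(G, σ)` with connected underlying simple graph,
the following are equivalent: (i) `Σ` is balanced; (ii) `D^max(Σ)` is cospectral with the
distance matrix `D(G)`; (iii) `D^min(Σ)` is cospectral with `D(G)`; (iv) the largest
eigenvalue of `D^max(Σ)` equals that of `D(G)`; (v) the largest eigenvalue of `D^min(Σ)`
equals that of `D(G)`. -/
theorem balanced_iff_distance_spectral {V : Type*} [Fintype V] [DecidableEq V]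
    (G : SimpleGraph V) (σ : V → V → ℤ) (hσ : IsSignature G σ) (hG : G.Connected) :
    (IsBalanced G σ ↔
      (Dmax G σ).charpoly = (Matrix.of fun u v => (G.dist u v : ℝ)).charpoly) ∧
    (IsBalanced G σ ↔
      (Dmin G σ).charpoly = (Matrix.of fun u v => (G.dist u v : ℝ)).charpoly) ∧
    (IsBalanced G σ ↔
      largestEigenvalue (Dmax G σ) =
        largestEigenvalue (Matrix.of fun u v => (G.dist u v : ℝ))) ∧
    (IsBalanced G σ ↔
      largestEigenvalue (Dmin G σ) =
        largestEigenvalue (Matrix.of fun u v => (G.dist u v : ℝ))) := by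
  exact balanced_iff_distance_spectral' hσ hG
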